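/- Fix r ≥ 0, σ > 0, Δt > 0, γ̂ ≥ γ̂* > 0 and consider the vega of the liquidity token: ∂V/∂σ(P) for V(P;σ) = 2γ̂√P/γ̂*(σ), where γ̂*(σ) := 2[-1 + (Φ((r+σ²/2)√Δt/σ) - e^{-rΔt}Φ((r-σ²/2)√Δt/σ))/(1 - e^{-(r+σ²/4)Δt/2})]^{-1}. Then for each fixed P > 0, ∂V/∂σ(P) = (γ̂√P·e^{-(r+σ²/4)Δt/2}/(1 - e^{-(r+σ²/4)Δt/2}))·[√(Δt/(2π))·e^{-r²Δt/(2σ²)} - (σΔt/4)·(Φ((r+σ²/2)√Δt/σ) - e^{-rΔt}Φ((r-σ²/2)√Δt/σ))/(1 - e^{-(r+σ²/4)Δt/2})]. -/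

import Mathlib

open Real MeasureTheory

/-- standard normal CDF -/
noncomputable def Phi (x : ℝ) : ℝ := ∫ t in Set.Iic x, Real.exp (-t^2/2) / Real.sqrt (2*π)

/-- critical fee level γ̂*(σ) from the CPMM valuation theorem -/
noncomputable def gammaStar (r Δt σ : ℝ) : ℝ :=
  2 * (-1 + (Phi ((r + σ^2/2) * Real.sqrt Δt / σ)
      - Real.exp (-(r*Δt)) * Phi ((r - σ^2/2) * Real.sqrt Δt / σ)) /
      (1 - Real.exp (-(r + σ^2/4)*Δt/2)))⁻¹

lemma cont_gauss : Continuous (fun t : ℝ => Real.exp (-t^2/2) / Real.sqrt (2*π)) := by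
  fun_prop

lemma integrable_gauss : Integrable (fun t : ℝ => Real.exp (-t^2/2) / Real.sqrt (2*π)) := by
  have h := (integrable_exp_neg_mul_sq (by norm_num : (0:ℝ) < 1/2)).div_const (Real.sqrt (2*π))
  convert h using 2 with t
  ring_nf

lemma hasDerivAt_Phi (x : ℝ) : HasDerivAt Phi (Real.exp (-x^2/2) / Real.sqrt (2*π)) x := by
  have key : ∀ y : ℝ, Phi y = (∫ t in (0:ℝ)..y, Real.exp (-t^2/2) / Real.sqrt (2*π)) + Phi 0 := by
    intro y
    have := intervalIntegral.integral_Iic_sub_Iic (μ := volume)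
      (f := fun t : ℝ => Real.exp (-t^2/2) / Real.sqrt (2*π))
      integrable_gauss.integrableOn integrable_gauss.integrableOn (a := 0) (b := y)
    simp only [Phi]
    linarith [this]
  have h1 : HasDerivAt (fun y => (∫ t in (0:ℝ)..y, Real.exp (-t^2/2) / Real.sqrt (2*π)) + Phi 0)
      (Real.exp (-x^2/2) / Real.sqrt (2*π)) x := by
    refine HasDerivAt.add_const _ ?_
    exact intervalIntegral.integral_hasDerivAt_right
      integrable_gauss.intervalIntegrable
      cont_gauss.aestronglyMeasurable.stronglyMeasurableAtFilter
      cont_gauss.continuousAt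
  exact h1.congr_of_eventuallyEq (Filter.Eventually.of_forall key)

set_option maxHeartbeats 1000000 in
theorem stmt15 (r Δt γ P σ : ℝ) (hr : 0 ≤ r) (hΔt : 0 < Δt) (hσ : 0 < σ)
    (hP : 0 < P) (hγs : 0 < gammaStar r Δt σ) (hγ : gammaStar r Δt σ ≤ γ) :
    HasDerivAt (fun s : ℝ => 2 * γ * Real.sqrt P / gammaStar r Δt s)
      ((γ * Real.sqrt P * Real.exp (-(r + σ^2/4)*Δt/2) /
          (1 - Real.exp (-(r + σ^2/4)*Δt/2))) *
        (Real.sqrt (Δt/(2*π)) * Real.exp (-r^2*Δt/(2*σ^2))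
          - (σ*Δt/4) *
            (Phi ((r + σ^2/2) * Real.sqrt Δt / σ)
              - Real.exp (-(r*Δt)) * Phi ((r - σ^2/2) * Real.sqrt Δt / σ)) /
            (1 - Real.exp (-(r + σ^2/4)*Δt/2)))) σ := by
  set st := Real.sqrt Δt with hst
  have hstpos : 0 < st := Real.sqrt_pos.mpr hΔt
  have hst2 : st^2 = Δt := Real.sq_sqrt hΔt.le
  set A := (r + σ^2/2) * st / σ with hA
  set B := (r - σ^2/2) * st / σ with hB
  set E := Real.exp (-(r + σ^2/4)*Δt/2) with hE
  have hE1 : E < 1 := by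
    rw [hE, Real.exp_lt_one_iff]
    have h1 : 0 < r + σ^2/4 := by nlinarith [pow_pos hσ 2]
    nlinarith [mul_pos h1 hΔt]
  have hD0 : (1 : ℝ) - E ≠ 0 := by linarith
  -- derivative of a
  have ha : HasDerivAt (fun s : ℝ => (r + s^2/2) * st / s)
      ((((2:ℕ)*σ^1)/2*st*σ - (r + σ^2/2)*st*1)/σ^2) σ := by
    exact ((((hasDerivAt_pow 2 σ).div_const 2).const_add r).mul_const st).div (hasDerivAt_id σ) hσ.ne'
  have hb : HasDerivAt (fun s : ℝ => (r - s^2/2) * st / s)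
      ((-((2:ℕ)*σ^1/2)*st*σ - (r - σ^2/2)*st*1)/σ^2) σ := by
    exact ((((hasDerivAt_pow 2 σ).div_const 2).const_sub r).mul_const st).div (hasDerivAt_id σ) hσ.ne'
  have hPa : HasDerivAt (fun s : ℝ => Phi ((r + s^2/2) * st / s))
      (Real.exp (-A^2/2) / Real.sqrt (2*π) * ((((2:ℕ)*σ^1)/2*st*σ - (r + σ^2/2)*st*1)/σ^2)) σ :=
    (hasDerivAt_Phi A).comp (h := fun s : ℝ => (r + s^2/2) * st / s) σ ha
  have hPb : HasDerivAt (fun s : ℝ => Phi ((r - s^2/2) * st / s))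
      (Real.exp (-B^2/2) / Real.sqrt (2*π) * ((-((2:ℕ)*σ^1/2))*st*σ - (r - σ^2/2)*st*1)/σ^2) σ := by
    have := (hasDerivAt_Phi B).comp (h := fun s : ℝ => (r - s^2/2) * st / s) σ hb
    refine this.congr_deriv ?_
    ring
  have hN : HasDerivAt (fun s : ℝ => Phi ((r + s^2/2) * st / s)
      - Real.exp (-(r*Δt)) * Phi ((r - s^2/2) * st / s))
      (Real.exp (-A^2/2) / Real.sqrt (2*π) * ((((2:ℕ)*σ^1)/2*st*σ - (r + σ^2/2)*st*1)/σ^2)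
        - Real.exp (-(r*Δt)) * (Real.exp (-B^2/2) / Real.sqrt (2*π) * ((-((2:ℕ)*σ^1/2))*st*σ - (r - σ^2/2)*st*1)/σ^2)) σ :=
    hPa.sub (hPb.const_mul _)
  -- derivative of D
  have hu : HasDerivAt (fun s : ℝ => -(r + s^2/4)*Δt/2) (-((2:ℕ)*σ^1/4)*Δt/2) σ :=
    ((((hasDerivAt_pow 2 σ).div_const 4).const_add r).neg.mul_const Δt).div_const 2
  have hD : HasDerivAt (fun s : ℝ => 1 - Real.exp (-(r + s^2/4)*Δt/2))
      (-(E * (-((2:ℕ)*σ^1/4)*Δt/2))) σ := hu.exp.const_sub 1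
  -- the quotient
  have hQ := hN.div hD hD0
  have hg := ((hQ.const_add (-1)).const_mul (γ * Real.sqrt P))
  -- abbreviations for the values at σ
  set Nv := Phi A - Real.exp (-(r*Δt)) * Phi B with hNv
  -- function equality
  have hfe : (fun s : ℝ => 2 * γ * Real.sqrt P / gammaStar r Δt s)
      = fun s : ℝ => γ * Real.sqrt P * (-1 + (Phi ((r + s^2/2) * st / s)
          - Real.exp (-(r*Δt)) * Phi ((r - s^2/2) * st / s))
          / (1 - Real.exp (-(r + s^2/4)*Δt/2))) := by
    funext s
    simp only [gammaStar, ← hst]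
    rw [div_eq_mul_inv, mul_inv, inv_inv]
    ring
  rw [hfe]
  refine hg.congr_deriv ?_
  -- now the big algebraic identity
  -- key identity 1: e^{-rΔt} e^{-B²/2} = e^{-A²/2}
  have key1 : Real.exp (-(r*Δt)) * Real.exp (-B^2/2) = Real.exp (-A^2/2) := by
    rw [← Real.exp_add]
    congr 1
    have hA2 : A^2 = (r + σ^2/2)^2 * Δt / σ^2 := by rw [hA, div_pow, mul_pow, hst2]
    have hB2 : B^2 = (r - σ^2/2)^2 * Δt / σ^2 := by rw [hB, div_pow, mul_pow, hst2]
    rw [hA2, hB2]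
    field_simp
    ring
  -- key identity 2: e^{-A²/2}/√(2π) * st = √(Δt/(2π)) e^{-r²Δt/(2σ²)} E
  have key2 : Real.exp (-A^2/2) / Real.sqrt (2*π) * st
      = Real.sqrt (Δt/(2*π)) * Real.exp (-r^2*Δt/(2*σ^2)) * E := by
    have hA2 : A^2 = (r + σ^2/2)^2 * Δt / σ^2 := by rw [hA, div_pow, mul_pow, hst2]
    have h1 : Real.exp (-A^2/2) = Real.exp (-r^2*Δt/(2*σ^2)) * E := by
      rw [hE, ← Real.exp_add]
      congr 1
      rw [hA2]
      field_simp
      ring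
    have h2 : Real.sqrt (Δt/(2*π)) = st / Real.sqrt (2*π) := by
      rw [hst, Real.sqrt_div hΔt.le]
    rw [h1, h2]
    ring
  -- simplify N'
  have hsum : Real.exp (-A^2/2) / Real.sqrt (2*π) * ((((2:ℕ)*σ^1)/2*st*σ - (r + σ^2/2)*st*1)/σ^2)
        - Real.exp (-(r*Δt)) * (Real.exp (-B^2/2) / Real.sqrt (2*π) * ((-((2:ℕ)*σ^1/2))*st*σ - (r - σ^2/2)*st*1)/σ^2)
      = Real.sqrt (Δt/(2*π)) * Real.exp (-r^2*Δt/(2*σ^2)) * E := by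
    have : Real.exp (-(r*Δt)) * (Real.exp (-B^2/2) / Real.sqrt (2*π) * ((-((2:ℕ)*σ^1/2))*st*σ - (r - σ^2/2)*st*1)/σ^2)
        = Real.exp (-A^2/2) / Real.sqrt (2*π) * (((-((2:ℕ)*σ^1/2))*st*σ - (r - σ^2/2)*st*1)/σ^2) := by
      rw [← key1]; ring
    rw [this, ← key2]
    field_simp
    ring
  rw [hsum, ← hE]
  clear_value st A B E Nv
  field_simp
  ring
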